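/- Fix integers n ≥ 1 and d ≥ 1, let I_d := {i : Fin (n+1) → ℕ | ∑_j i_j = d}, and for i ∈ I_d define l_i : ℝ^{n+1} → ℝ by l_i(w) := (d/(n+1))·(∑_j w_j) − ∑_j i_j·w_j. Let I ⊆ I_d be nonempty and c : I → ℝ. Suppose that for every nonzero w ∈ ℝ^{n+1} with ∑_j w_j = 0 there exists i ∈ I with ∑_j i_j·w_j > 0. Then the function φ(w) := max_{i ∈ I} (l_i(w) − c_i) is radially unbounded on the hyperplane H := {w ∈ ℝ^{n+1} : ∑_j w_j = 0}: for every sequence (w_k) in H with ‖w_k‖ → ∞, one has φ(w_k) → ∞. -/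

import Mathlib

/-- Core of Lemma 4.6(iii) of the paper: if for every nonzero balanced `w` some exponent
vector `i ∈ I` satisfies `∑_j i_j·w_j > 0` (the numerical criterion for stability), then
`φ(w) = max_{i ∈ I}(l_i(w) − c_i)` is radially unbounded on the balanced hyperplane
`H = {w : ∑_j w_j = 0}`: along every sequence in `H` with `‖w_k‖ → ∞` one has
`φ(w_k) → ∞`. -/
theorem stmt11 (n d : ℕ) (hn : 1 ≤ n) (hd : 1 ≤ d)
    (I : Finset (Fin (n+1) → ℕ)) (hI : I.Nonempty)
    (hdeg : ∀ i ∈ I, (∑ j, i j) = d)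
    (c : (Fin (n+1) → ℕ) → ℝ)
    (hstab : ∀ w : EuclideanSpace ℝ (Fin (n+1)), w ≠ 0 → (∑ j, w j) = 0 →
      ∃ i ∈ I, 0 < ∑ j, (i j : ℝ) * w j) :
    ∀ wseq : ℕ → EuclideanSpace ℝ (Fin (n+1)),
      (∀ k, (∑ j, wseq k j) = 0) →
      Filter.Tendsto (fun k => ‖wseq k‖) Filter.atTop Filter.atTop →
      Filter.Tendsto (fun k => I.sup' hI fun i =>
          ((d : ℝ) / (n+1)) * (∑ j, wseq k j) - (∑ j, (i j : ℝ) * wseq k j) - c i)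
        Filter.atTop Filter.atTop := by
  intro wseq hbal hnorm
  -- the gauge function
  have hg_cont : Continuous (fun w : EuclideanSpace ℝ (Fin (n+1)) =>
      I.sup' hI (fun i => ∑ j, -(i j : ℝ) * w j)) := by
    apply Continuous.finset_sup'_apply hI
    intro i _
    exact continuous_finset_sum _ fun j _ => (continuous_const.mul ((continuous_apply j).comp (PiLp.continuous_ofLp _ _)))
  -- the compact sphere-slice
  set S : Set (EuclideanSpace ℝ (Fin (n+1))) := {w | ‖w‖ = 1 ∧ (∑ j, w j) = 0} with hS
  have hS_closed : IsClosed S :=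
    (isClosed_eq continuous_norm continuous_const).inter
      (isClosed_eq (continuous_finset_sum _ fun j _ => (continuous_apply j).comp (PiLp.continuous_ofLp _ _)) continuous_const)
  have hS_compact : IsCompact S := by
    apply Metric.isCompact_of_isClosed_isBounded hS_closed
    apply (Metric.isBounded_closedBall (x := (0 : EuclideanSpace ℝ (Fin (n+1)))) (r := 1)).subset
    intro w hw
    simp only [Metric.mem_closedBall, dist_zero_right]
    exact le_of_eq hw.1
  -- S is nonempty
  have h01 : (0 : Fin (n+1)) ≠ 1 := by
    intro h
    have h2 := congrArg Fin.val h
    rw [Fin.val_zero, Fin.val_one', Nat.mod_eq_of_lt (by omega : 1 < n + 1)] at h2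
    exact one_ne_zero h2.symm
  have hS_ne : S.Nonempty := by
    set v : EuclideanSpace ℝ (Fin (n+1)) := EuclideanSpace.single (0 : Fin (n+1)) (1:ℝ)
      - EuclideanSpace.single (1 : Fin (n+1)) (1:ℝ) with hv
    have hv0 : v ≠ 0 := by
      intro h
      have h2 : v 0 = 0 := by rw [h]; rfl
      rw [hv] at h2
      simp only [PiLp.sub_apply, EuclideanSpace.single_apply, if_pos rfl, if_neg h01] at h2
      norm_num at h2
    have hsum : (∑ j, v j) = 0 := by
      simp [hv, EuclideanSpace.single_apply, Finset.sum_sub_distrib]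
    refine ⟨‖v‖⁻¹ • v, norm_smul_inv_norm hv0, ?_⟩
    simp only [PiLp.smul_apply, smul_eq_mul, ← Finset.mul_sum, hsum, mul_zero]
  -- minimum of g on S is positive
  obtain ⟨u, huS, hu_min⟩ := hS_compact.exists_isMinOn hS_ne hg_cont.continuousOn
  set ε : ℝ := I.sup' hI (fun i => ∑ j, -(i j : ℝ) * u j) with hε
  have hε_pos : 0 < ε := by
    have hu0 : u ≠ 0 := by
      intro h
      rw [h] at huS
      simpa using huS.1
    have hnegu : (-u : EuclideanSpace ℝ (Fin (n+1))) ≠ 0 := neg_ne_zero.mpr hu0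
    have hsum : (∑ j, (-u : EuclideanSpace ℝ (Fin (n+1))) j) = 0 := by
      simp only [PiLp.neg_apply, Finset.sum_neg_distrib, huS.2, neg_zero]
    obtain ⟨i, hiI, hipos⟩ := hstab (-u) hnegu hsum
    have heq : (∑ j, (i j : ℝ) * (-u : EuclideanSpace ℝ (Fin (n+1))) j)
        = ∑ j, -(i j : ℝ) * u j := by
      apply Finset.sum_congr rfl; intro j _
      rw [PiLp.neg_apply]; ring
    rw [heq] at hipos
    exact hipos.trans_le (Finset.le_sup' (fun i => ∑ j, -(i j : ℝ) * u j) hiI)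
  -- the gauge grows linearly on the hyperplane
  have hkey : ∀ w : EuclideanSpace ℝ (Fin (n+1)), (∑ j, w j) = 0 →
      ε * ‖w‖ ≤ I.sup' hI (fun i => ∑ j, -(i j : ℝ) * w j) := by
    intro w hw
    rcases eq_or_ne w 0 with rfl | hw0
    · simp only [norm_zero, mul_zero]
      obtain ⟨i, hi⟩ := hI
      have h0 : (0:ℝ) = ∑ j, -(i j : ℝ) * (0 : EuclideanSpace ℝ (Fin (n+1))) j := by
        simp [PiLp.zero_apply]
      rw [h0]
      exact Finset.le_sup' (fun i => ∑ j, -(i j : ℝ) * (0 : EuclideanSpace ℝ (Fin (n+1))) j) hi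
    · have hnw : (0:ℝ) < ‖w‖ := norm_pos_iff.mpr hw0
      have hu'S : ‖w‖⁻¹ • w ∈ S := by
        refine ⟨norm_smul_inv_norm hw0, ?_⟩
        simp only [PiLp.smul_apply, smul_eq_mul, ← Finset.mul_sum, hw, mul_zero]
      have hεu' : ε ≤ I.sup' hI (fun i => ∑ j, -(i j : ℝ) * (‖w‖⁻¹ • w) j) := hu_min hu'S
      obtain ⟨i, hiI, hieq⟩ :=
        Finset.exists_mem_eq_sup' hI (fun i => ∑ j, -(i j : ℝ) * (‖w‖⁻¹ • w) j)
      have hterm : (∑ j, -(i j : ℝ) * (‖w‖⁻¹ • w) j) = ‖w‖⁻¹ * ∑ j, -(i j : ℝ) * w j := by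
        rw [Finset.mul_sum]
        apply Finset.sum_congr rfl; intro j _
        rw [PiLp.smul_apply, smul_eq_mul]; ring
      have h1 : ε ≤ ‖w‖⁻¹ * ∑ j, -(i j : ℝ) * w j := by
        rw [← hterm, ← hieq]; exact hεu'
      have h2 : ε * ‖w‖ ≤ ∑ j, -(i j : ℝ) * w j := by
        have h3 := mul_le_mul_of_nonneg_right h1 (le_of_lt hnw)
        rwa [inv_mul_eq_div, div_mul_cancel₀ _ (ne_of_gt hnw)] at h3
      exact h2.trans (Finset.le_sup' (fun i => ∑ j, -(i j : ℝ) * w j) hiI)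
  -- bound φ from below
  set C : ℝ := I.sup' hI c with hC
  have hφ : ∀ k, ε * ‖wseq k‖ - C ≤ I.sup' hI fun i =>
      ((d : ℝ) / (n+1)) * (∑ j, wseq k j) - (∑ j, (i j : ℝ) * wseq k j) - c i := by
    intro k
    obtain ⟨i, hiI, hieq⟩ := Finset.exists_mem_eq_sup' hI (fun i => ∑ j, -(i j : ℝ) * wseq k j)
    have h1 : ε * ‖wseq k‖ ≤ ∑ j, -(i j : ℝ) * wseq k j := by
      rw [← hieq]; exact hkey _ (hbal k)
    have h2 : c i ≤ C := Finset.le_sup' c hiI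
    have h3 : ((d : ℝ) / (n+1)) * (∑ j, wseq k j) - (∑ j, (i j : ℝ) * wseq k j) - c i
        = (∑ j, -(i j : ℝ) * wseq k j) - c i := by
      rw [hbal k, mul_zero, zero_sub, ← Finset.sum_neg_distrib]
      simp [neg_mul]
    calc ε * ‖wseq k‖ - C ≤ (∑ j, -(i j : ℝ) * wseq k j) - c i := sub_le_sub h1 h2
    _ = ((d : ℝ) / (n+1)) * (∑ j, wseq k j) - (∑ j, (i j : ℝ) * wseq k j) - c i := h3.symm
    _ ≤ _ := Finset.le_sup'
        (fun i => ((d : ℝ) / (n+1)) * (∑ j, wseq k j) - (∑ j, (i j : ℝ) * wseq k j) - c i) hiI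
  -- conclude
  apply Filter.tendsto_atTop_mono hφ
  apply Filter.tendsto_atTop_add_const_right
  exact hnorm.const_mul_atTop hε_pos
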